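/- Let M and N be R-modules with Δ-derivations ∂_M, ∂_N and let γ_M = Id + (q²−q)∂_M. Then the formula ∂(s ⊗ t) = ∂_M(s) ⊗ t + γ_M(s) ⊗ ∂_N(t) defines a Δ-derivation on M ⊗_R N. -/

import Mathlib

open TensorProduct

/-- The twisted integer (q-analog) `(k)_q = 1 + q + ⋯ + q^{k-1}`. -/
def qInt {R : Type*} [CommRing R] (q : R) (n : ℕ) : R := ∑ i ∈ Finset.range n, q ^ i

/-- Let `R = W[[q−1]]` (with `q = X+1`), `γ` the `W`-algebra endomorphism with
`γ(q) = q^{p+1}`, `∂_Δ` the Δ-derivation of `R` with `∂_Δ(q) = (p)_q`.  Given Δ-derivations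
`D_M`, `D_N` on `R`-modules `M`, `N` and `γ_M := Id + (q²−q)·D_M`, the formula
`s ⊗ t ↦ D_M(s) ⊗ t + γ_M(s) ⊗ D_N(t)` defines a Δ-derivation on `M ⊗_R N`. -/
theorem stmt17 {W : Type*} [CommRing W] (p : ℕ) (hp : 0 < p)
    (γ : PowerSeries W →ₐ[W] PowerSeries W)
    (hγ : γ (PowerSeries.X + 1) = (PowerSeries.X + 1) ^ (p + 1))
    (dΔ : PowerSeries W →ₗ[W] PowerSeries W)
    (hdΔ : ∀ α β : PowerSeries W, dΔ (α * β) = dΔ α * β + γ α * dΔ β)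
    (hdΔq : dΔ (PowerSeries.X + 1) = qInt (PowerSeries.X + 1 : PowerSeries W) p)
    (M N : Type*) [AddCommGroup M] [Module (PowerSeries W) M]
    [AddCommGroup N] [Module (PowerSeries W) N]
    [Module W M] [IsScalarTower W (PowerSeries W) M]
    [Module W N] [IsScalarTower W (PowerSeries W) N]
    [SMulCommClass (PowerSeries W) W M]
    (DM : M →ₗ[W] M)
    (hDM : ∀ (α : PowerSeries W) (s : M), DM (α • s) = dΔ α • s + γ α • DM s)
    (DN : N →ₗ[W] N)
    (hDN : ∀ (α : PowerSeries W) (t : N), DN (α • t) = dΔ α • t + γ α • DN t) :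
    ∃ D : (M ⊗[PowerSeries W] N) →ₗ[W] (M ⊗[PowerSeries W] N),
      (∀ (s : M) (t : N),
        D (s ⊗ₜ t) = DM s ⊗ₜ t +
          (s + (((PowerSeries.X + 1) ^ 2 - (PowerSeries.X + 1) : PowerSeries W)) • DM s) ⊗ₜ
            DN t) ∧
      ∀ (α : PowerSeries W) (z : M ⊗[PowerSeries W] N),
        D (α • z) = dΔ α • z + γ α • D z := by
  classical
  set c : PowerSeries W := (PowerSeries.X + 1) ^ 2 - (PowerSeries.X + 1) with hcdef
  -- basic facts about dΔ and γ
  have hdΔ1 : dΔ (1 : PowerSeries W) = 0 := by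
    have h := hdΔ 1 1
    simp only [mul_one, map_one, one_mul] at h
    exact add_eq_left.mp h.symm
  have hdΔC : ∀ a : W, dΔ (PowerSeries.C a) = 0 := by
    intro a
    rw [show (PowerSeries.C a) = a • (1 : PowerSeries W) by
      rw [PowerSeries.smul_eq_C_mul, mul_one], map_smul, hdΔ1, smul_zero]
  have hγC : ∀ a : W, γ (PowerSeries.C a) = PowerSeries.C a := by
    intro a
    rw [PowerSeries.C_eq_algebraMap]
    exact γ.commutes a
  -- the defect δ
  set δ : PowerSeries W → PowerSeries W := fun f => γ f - f - c * dΔ f with hδdef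
  have hδadd : ∀ f g : PowerSeries W, δ (f + g) = δ f + δ g := by
    intro f g
    simp only [hδdef, map_add]
    ring
  have hδmul : ∀ f g : PowerSeries W, δ (f * g) = δ f * g + γ f * δ g := by
    intro f g
    simp only [hδdef, map_mul, hdΔ f g]
    ring
  have hδC : ∀ a : W, δ (PowerSeries.C a) = 0 := by
    intro a
    simp only [hδdef, hγC a, hdΔC a, mul_zero]
    ring
  have hdΔX : dΔ (PowerSeries.X : PowerSeries W) =
      qInt (PowerSeries.X + 1 : PowerSeries W) p := by
    have h : dΔ ((PowerSeries.X : PowerSeries W) + 1) = dΔ PowerSeries.X + dΔ 1 := map_add _ _ _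
    rw [hdΔq, hdΔ1, add_zero] at h
    exact h.symm
  have hγX : γ (PowerSeries.X : PowerSeries W) = (PowerSeries.X + 1) ^ (p + 1) - 1 := by
    have h : γ ((PowerSeries.X : PowerSeries W) + 1) = γ PowerSeries.X + 1 := by
      rw [map_add, map_one]
    rw [hγ] at h
    linear_combination -h
  have hδX : δ (PowerSeries.X : PowerSeries W) = 0 := by
    have hgs := geom_sum_mul (PowerSeries.X + 1 : PowerSeries W) p
    simp only [hδdef, hγX, hdΔX, hcdef, qInt]
    rw [pow_succ]
    linear_combination (-(PowerSeries.X + 1) : PowerSeries W) * hgs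
  -- γ X is divisible by X
  obtain ⟨u, hu⟩ : (PowerSeries.X : PowerSeries W) ∣ γ PowerSeries.X := by
    rw [PowerSeries.X_dvd_iff, hγX]
    simp
  -- δ f is divisible by every power of X
  have hdvd : ∀ (n : ℕ) (f : PowerSeries W), (PowerSeries.X : PowerSeries W) ^ n ∣ δ f := by
    intro n
    induction n with
    | zero => intro f; simp only [pow_zero]; exact one_dvd _
    | succ n ih =>
      intro f
      set a := PowerSeries.constantCoeff f with ha
      obtain ⟨g, hg⟩ : (PowerSeries.X : PowerSeries W) ∣ (f - PowerSeries.C a) := by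
        rw [PowerSeries.X_dvd_iff]
        simp [ha]
      have hf : f = PowerSeries.C a + PowerSeries.X * g := by
        rw [← hg]; ring
      obtain ⟨k, hk⟩ := ih g
      rw [hf, hδadd, hδC, zero_add, hδmul, hδX, zero_mul, zero_add, hu, hk]
      exact ⟨u * k, by ring⟩
  have hδ0 : ∀ f : PowerSeries W, δ f = 0 := by
    intro f
    ext n
    have h := hdvd (n + 1) f
    rw [PowerSeries.X_pow_dvd_iff] at h
    simpa using h n (Nat.lt_succ_self n)
  -- THE KEY IDENTITY:  γ f = f + c * dΔ f
  have hKEY : ∀ f : PowerSeries W, γ f = f + c * dΔ f := by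
    intro f
    have h := hδ0 f
    simp only [hδdef] at h
    linear_combination h
  -- the bilinear map
  set b : M →+ N →+ M ⊗[PowerSeries W] N :=
    AddMonoidHom.mk'
      (fun s => AddMonoidHom.mk'
        (fun t => DM s ⊗ₜ t + (s + c • DM s) ⊗ₜ DN t)
        (fun t₁ t₂ => by
          simp only [map_add, tmul_add]
          abel))
      (fun s₁ s₂ => by
        ext t
        simp only [AddMonoidHom.mk'_apply, AddMonoidHom.add_apply, map_add, smul_add,
          add_tmul]
        abel) with hbdef
  have hbtmul : ∀ (s : M) (t : N), b s t = DM s ⊗ₜ t + (s + c • DM s) ⊗ₜ DN t := fun s t => rfl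
  -- key computation on the left
  have hleft : ∀ (r : PowerSeries W) (s : M) (t : N),
      b (r • s) t = dΔ r • (s ⊗ₜ t) + γ r • b s t := by
    intro r s t
    rw [hbtmul, hbtmul, hDM]
    rw [hKEY r]
    simp only [smul_add, tmul_add, add_tmul, ← smul_tmul', smul_smul]
    simp only [add_smul, smul_add, mul_smul]; abel_nf; simp only [smul_comm r c, smul_comm (dΔ r) c]
  have hright : ∀ (r : PowerSeries W) (s : M) (t : N),
      b s (r • t) = dΔ r • (s ⊗ₜ t) + γ r • b s t := by
    intro r s t
    rw [hbtmul, hbtmul, hDN]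
    rw [hKEY r]
    simp only [smul_add, tmul_add, add_tmul, tmul_smul, ← smul_tmul', smul_smul]
    simp only [add_smul, smul_add, mul_smul]; abel_nf; simp only [smul_comm r c, smul_comm (dΔ r) c]; abel
  have hbal : ∀ (r : PowerSeries W) (s : M) (t : N), b (r • s) t = b s (r • t) := by
    intro r s t
    rw [hleft, hright]
  -- the lifted additive map
  set D₀ : M ⊗[PowerSeries W] N →+ M ⊗[PowerSeries W] N :=
    TensorProduct.liftAddHom b hbal with hD₀def
  have hD₀tmul : ∀ (s : M) (t : N),
      D₀ (s ⊗ₜ t) = DM s ⊗ₜ t + (s + c • DM s) ⊗ₜ DN t := fun s t => rfl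
  -- upgrade to a W-linear map
  have hD₀smul : ∀ (w : W) (z : M ⊗[PowerSeries W] N), D₀ (w • z) = w • D₀ z := by
    intro w z
    induction z using TensorProduct.induction_on with
    | zero => simp
    | tmul s t =>
      rw [smul_tmul', hD₀tmul, hD₀tmul, map_smul]
      simp only [smul_add, smul_tmul', smul_comm c w]
    | add z₁ z₂ ih₁ ih₂ =>
      rw [smul_add, map_add, ih₁, ih₂, map_add, smul_add]
  set D : (M ⊗[PowerSeries W] N) →ₗ[W] (M ⊗[PowerSeries W] N) :=
    { toFun := D₀
      map_add' := map_add D₀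
      map_smul' := hD₀smul } with hDdef
  refine ⟨D, fun s t => hD₀tmul s t, ?_⟩
  intro α z
  induction z using TensorProduct.induction_on with
  | zero => simp
  | tmul s t =>
    have h1 : α • (s ⊗ₜ t : M ⊗[PowerSeries W] N) = (α • s) ⊗ₜ t := smul_tmul' α s t
    show D₀ (α • (s ⊗ₜ t)) = dΔ α • (s ⊗ₜ t) + γ α • D₀ (s ⊗ₜ t)
    rw [h1]
    exact hleft α s t
  | add z₁ z₂ ih₁ ih₂ =>
    show D₀ (α • (z₁ + z₂)) = dΔ α • (z₁ + z₂) + γ α • D₀ (z₁ + z₂)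
    rw [smul_add, map_add, map_add]
    show D (α • z₁) + D (α • z₂) = _
    rw [ih₁, ih₂]
    show _ = dΔ α • (z₁ + z₂) + γ α • (D z₁ + D z₂)
    rw [smul_add, smul_add]
    abel
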